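/- Let H be a finite simple graph and β an integer parameter. If an edge (u,v) with deg_H(u) + deg_H(v) > β is deleted from H, then the potential Φ(H) = (β - 1/2)·∑_v deg_H(v) - ∑_{(u,v)∈E(H)}(deg_H(u)+deg_H(v)) increases by at least 1. -/

import Mathlib

open SimpleGraph Finset
open scoped Classical

/-- The degree of a vertex. -/
noncomputable def deg {V : Type*} (H : SimpleGraph V) (v : V) : ℕ :=
  (H.neighborSet v).ncard

/-- The edge-degree of an edge, as a function on `Sym2 V`. -/
noncomputable def edgeDeg {V : Type*} (H : SimpleGraph V) : Sym2 V → ℝ :=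
  Sym2.lift ⟨fun u v => (deg H u : ℝ) + (deg H v : ℝ), fun u v => by ring⟩

/-- The potential function `Φ(H) = (β - 1/2)·∑_v deg_H(v) - ∑_{(u,v)∈E(H)} (deg_H(u)+deg_H(v))`. -/
noncomputable def Phi {V : Type*} [Fintype V] (β : ℝ) (H : SimpleGraph V) : ℝ :=
  (β - 1/2) * ∑ v, (deg H v : ℝ) - ∑ e ∈ H.edgeFinset, edgeDeg H e

lemma deg_eq_degree {V : Type*} [Fintype V] (G : SimpleGraph V) (w : V) :
    deg G w = G.degree w := by
  rw [deg, ← card_neighborSet_eq_degree, Set.ncard_eq_toFinset_card', Set.toFinset_card]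

lemma sum_edgeDeg {V : Type*} [Fintype V] (G : SimpleGraph V) :
    ∑ e ∈ G.edgeFinset, edgeDeg G e = ∑ w, (deg G w : ℝ) ^ 2 := by
  classical
  have h1 : ∀ e ∈ G.edgeFinset, edgeDeg G e
      = ∑ w, if w ∈ e then (deg G w : ℝ) else 0 := by
    intro e he
    induction e with
    | h a b =>
      have hab : a ≠ b := (G.mem_edgeSet.mp (mem_edgeFinset.mp he)).ne
      rw [← Finset.sum_filter]
      have : Finset.univ.filter (· ∈ s(a, b)) = {a, b} := by
        ext w; simp [Sym2.mem_iff]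
      rw [this, Finset.sum_pair hab]
      simp [edgeDeg]
  rw [Finset.sum_congr rfl h1, Finset.sum_comm]
  refine Finset.sum_congr rfl fun w _ => ?_
  rw [← Finset.sum_filter, Finset.sum_const, ← incidenceFinset_eq_filter,
    card_incidenceFinset_eq_degree, ← deg_eq_degree]
  rw [nsmul_eq_mul, sq]

/-- deleting an edge `(u,v)` with `deg_H(u) + deg_H(v) > β`
increases the potential `Φ` by at least `1`. -/
theorem stmt2 {V : Type*} [Fintype V] (H : SimpleGraph V) (β : ℤ) (u v : V)
    (huv : H.Adj u v) (hdeg : (β : ℤ) < (deg H u : ℤ) + (deg H v : ℤ)) :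
    Phi (β : ℝ) H + 1 ≤ Phi (β : ℝ) (H.deleteEdges {s(u, v)}) := by
  classical
  set H' := H.deleteEdges {s(u, v)} with hH'
  have hne : u ≠ v := huv.ne
  -- degrees in H'
  have hkey : ∀ w, (deg H' w : ℝ)
      = (deg H w : ℝ) - (if w = u then 1 else 0) - (if w = v then 1 else 0) := by
    intro w
    have hfin : (H.neighborSet w).Finite := Set.toFinite _
    by_cases hwu : w = u
    · subst hwu
      have hns : H'.neighborSet w = H.neighborSet w \ {v} := by
        ext x
        simp only [hH', mem_neighborSet, deleteEdges_adj, Set.mem_diff,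
          Set.mem_singleton_iff, Set.mem_setOf_eq]
        constructor
        · rintro ⟨h1, h2⟩
          refine ⟨h1, fun hx => h2 ?_⟩
          rw [hx]
        · rintro ⟨h1, h2⟩
          refine ⟨h1, fun hx => h2 ?_⟩
          rcases Sym2.eq_iff.mp hx with ⟨h3, h4⟩ | ⟨h3, h4⟩
          · exact h4
          · exact absurd h3 hne
      have hv : v ∈ H.neighborSet w := huv
      have : (H.neighborSet w \ {v}).ncard = (H.neighborSet w).ncard - 1 :=
        Set.ncard_diff_singleton_of_mem hv
      have hpos : 0 < (H.neighborSet w).ncard := (Set.ncard_pos hfin).mpr ⟨v, hv⟩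
      rw [deg, deg, hns, this]
      simp [hne, Nat.cast_sub hpos]
    · by_cases hwv : w = v
      · subst hwv
        have hns : H'.neighborSet w = H.neighborSet w \ {u} := by
          ext x
          simp only [hH', mem_neighborSet, deleteEdges_adj, Set.mem_diff,
            Set.mem_singleton_iff, Set.mem_setOf_eq]
          constructor
          · rintro ⟨h1, h2⟩
            refine ⟨h1, fun hx => h2 ?_⟩
            rw [hx]; exact Sym2.eq_swap
          · rintro ⟨h1, h2⟩
            refine ⟨h1, fun hx => h2 ?_⟩
            rcases Sym2.eq_iff.mp hx with ⟨h3, h4⟩ | ⟨h3, h4⟩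
            · exact absurd h3.symm hne
            · exact h4
        have hu : u ∈ H.neighborSet w := huv.symm
        have : (H.neighborSet w \ {u}).ncard = (H.neighborSet w).ncard - 1 :=
          Set.ncard_diff_singleton_of_mem hu
        have hpos : 0 < (H.neighborSet w).ncard :=
          (Set.ncard_pos hfin).mpr ⟨u, hu⟩
        rw [deg, deg, hns, this]
        simp [hne, hwu, Nat.cast_sub hpos]
      · have hns : H'.neighborSet w = H.neighborSet w := by
          ext x
          simp only [hH', mem_neighborSet, deleteEdges_adj, Set.mem_singleton_iff,
            Set.mem_setOf_eq]
          constructor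
          · exact fun h => h.1
          · intro h1
            refine ⟨h1, fun hx => ?_⟩
            rcases Sym2.eq_iff.mp hx with ⟨h3, h4⟩ | ⟨h3, h4⟩
            · exact hwu h3
            · exact hwv h3
        rw [deg, deg, hns]
        simp [hwu, hwv]
  -- sum of degrees
  have hS : ∑ w, (deg H' w : ℝ) = (∑ w, (deg H w : ℝ)) - 2 := by
    simp only [hkey, Finset.sum_sub_distrib]
    rw [Finset.sum_ite_eq' Finset.univ u (fun _ => (1 : ℝ)),
      Finset.sum_ite_eq' Finset.univ v (fun _ => (1 : ℝ))]
    simp; ring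
  -- sum of squares
  have hQ : ∑ w, (deg H' w : ℝ) ^ 2
      = (∑ w, (deg H w : ℝ) ^ 2) - 2 * (deg H u : ℝ) - 2 * (deg H v : ℝ) + 2 := by
    have hsq : ∀ w, (deg H' w : ℝ) ^ 2 = (deg H w : ℝ) ^ 2
        - (if w = u then 2 * (deg H u : ℝ) - 1 else 0)
        - (if w = v then 2 * (deg H v : ℝ) - 1 else 0) := by
      intro w
      by_cases hwu : w = u
      · subst hwu
        have : (w = v) = False := by simp [hne]
        rw [hkey w]; simp [hne]; ring
      · by_cases hwv : w = v
        · subst hwv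
          rw [hkey w]; simp [hwu]; ring
        · rw [hkey w]; simp [hwu, hwv]
    simp only [hsq, Finset.sum_sub_distrib]
    rw [Finset.sum_ite_eq' Finset.univ u, Finset.sum_ite_eq' Finset.univ v]
    simp; ring
  have hd : (β : ℝ) + 1 ≤ (deg H u : ℝ) + (deg H v : ℝ) := by
    have : β + 1 ≤ (deg H u : ℤ) + (deg H v : ℤ) := hdeg
    exact_mod_cast this
  rw [Phi, Phi, sum_edgeDeg, sum_edgeDeg, hS, hQ]
  nlinarith [hd]
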